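/- arXiv:2206.14749 — 2 statements merged into one kernel-verified Lean document; each statement's English description precedes it below -/
import Mathlib

section
/- With v_0 = 2/w_0 - 1 and v_k = -2 w_k / w_0 for k ≠ 0, where w_k ≥ 0 is symmetric with Σ_k w_k = 1 and w_0 > 0, every entry of the discrete Fourier transform of v satisfies V_n = 1 + Σ_{k=1}^{K} (4 w_k / w_0)(1 - cos(2πkn/N)) ≥ 1; in particular V_n ≠ 0 for all n. -/
open Finset Real Complex

lemma sum_symm_aux {M : Type*} [AddCommMonoid M] (K : ℕ) (f : ℤ → M) :
    ∑ k ∈ Icc (-(K:ℤ)) (K:ℤ), f k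
      = f 0 + ∑ k ∈ Icc (1:ℤ) (K:ℤ), (f k + f (-k)) := by
  induction K with
  | zero => simp
  | succ K ih =>
    have e1 : Icc (-((K+1:ℕ):ℤ)) ((K+1:ℕ):ℤ)
        = insert (-((K:ℤ)+1)) (insert ((K:ℤ)+1) (Icc (-(K:ℤ)) (K:ℤ))) := by
      ext x; simp only [mem_Icc, mem_insert]; push_cast; omega
    have e2 : Icc (1:ℤ) ((K+1:ℕ):ℤ)
        = insert ((K:ℤ)+1) (Icc (1:ℤ) (K:ℤ)) := by
      ext x; simp only [mem_Icc, mem_insert]; push_cast; omega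
    rw [e1, e2, Finset.sum_insert (by simp only [mem_insert, mem_Icc]; omega),
      Finset.sum_insert (by simp only [mem_insert, mem_Icc]; omega),
      Finset.sum_insert (by simp only [mem_insert, mem_Icc]; omega), ih]
    abel

lemma exp_pair_aux (K : ℕ) (k n : ℤ) :
    Complex.exp (-(2 * Real.pi * Complex.I * k * n) / (2 * K + 1))
    + Complex.exp (-(2 * Real.pi * Complex.I * ((-k : ℤ) : ℂ) * n) / (2 * K + 1))
    = ((2 * Real.cos (2 * Real.pi * k * n / (2 * K + 1)) : ℝ) : ℂ) := by
  have h1 : (-(2 * Real.pi * Complex.I * k * n) / (2 * K + 1) : ℂ)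
      = ((-(2 * Real.pi * k * n / (2 * K + 1)) : ℝ) : ℂ) * Complex.I := by
    push_cast; ring
  have h2 : (-(2 * Real.pi * Complex.I * ((-k : ℤ) : ℂ) * n) / (2 * K + 1) : ℂ)
      = ((2 * Real.pi * k * n / (2 * K + 1) : ℝ) : ℂ) * Complex.I := by
    push_cast; ring
  rw [h1, h2, Complex.exp_mul_I, Complex.exp_mul_I]
  simp [← Complex.ofReal_cos, ← Complex.ofReal_sin, Real.cos_neg, Real.sin_neg]
  push_cast; ring

/-- Closed real form and lower bound for the DFT of the AR filter `v`. -/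
theorem stmt3 (K : ℕ) (w : ℤ → ℝ)
    (hw : ∀ k ∈ Icc (-(K : ℤ)) (K : ℤ), 0 ≤ w k)
    (hsym : ∀ k ∈ Icc (-(K : ℤ)) (K : ℤ), w k = w (-k))
    (hsum : ∑ k ∈ Icc (-(K : ℤ)) (K : ℤ), w k = 1)
    (hw0 : 0 < w 0)
    (v : ℤ → ℝ)
    (hv : ∀ k ∈ Icc (-(K : ℤ)) (K : ℤ),
      v k = if k = 0 then 2 / w 0 - 1 else -(2 * w k) / w 0)
    (V : ℤ → ℂ)
    (hV : ∀ n : ℤ, V n = ∑ k ∈ Icc (-(K : ℤ)) (K : ℤ),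
      (v k : ℂ) * Complex.exp (-(2 * Real.pi * Complex.I * k * n) / (2 * K + 1)))
    (n : ℤ) :
    V n = ((1 + ∑ k ∈ Icc (1 : ℤ) (K : ℤ),
        (4 * w k / w 0) * (1 - Real.cos (2 * Real.pi * k * n / (2 * K + 1))) : ℝ) : ℂ)
    ∧ (1 : ℝ) ≤ 1 + ∑ k ∈ Icc (1 : ℤ) (K : ℤ),
        (4 * w k / w 0) * (1 - Real.cos (2 * Real.pi * k * n / (2 * K + 1)))
    ∧ V n ≠ 0 := by
  have hmem : ∀ k ∈ Icc (1:ℤ) (K:ℤ),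
      k ∈ Icc (-(K:ℤ)) (K:ℤ) ∧ -k ∈ Icc (-(K:ℤ)) (K:ℤ) := by
    intro k hk; simp only [mem_Icc] at *; omega
  have h0mem : (0:ℤ) ∈ Icc (-(K:ℤ)) (K:ℤ) := by
    simp only [mem_Icc]; omega
  -- the real sums
  set θ : ℤ → ℝ := fun k => 2 * Real.pi * k * n / (2 * K + 1) with hθ
  -- value of v on positives
  have hvpos : ∀ k ∈ Icc (1:ℤ) (K:ℤ), v k = -(2 * w k) / w 0 ∧ v (-k) = -(2 * w k) / w 0 := by
    intro k hk
    obtain ⟨h1, h2⟩ := hmem k hk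
    have hk0 : k ≠ 0 := by simp only [mem_Icc] at hk; omega
    constructor
    · rw [hv k h1]; simp [hk0]
    · rw [hv _ h2]
      have : w (-k) = w k := (hsym k h1).symm
      simp [hk0, this, neg_eq_zero]
  -- symmetrized sum for w
  have hA : w 0 + 2 * ∑ k ∈ Icc (1:ℤ) (K:ℤ), w k = 1 := by
    rw [sum_symm_aux K w] at hsum
    rw [← hsum]
    rw [two_mul, ← Finset.sum_add_distrib]
    congr 1
    · exact Finset.sum_congr rfl fun k hk => by rw [← hsym k (hmem k hk).1]
  -- compute V n
  have hVn : V n = ((2 / w 0 - 1) +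
      ∑ k ∈ Icc (1:ℤ) (K:ℤ), (-(2 * w k) / w 0) * (2 * Real.cos (θ k)) : ℝ) := by
    rw [hV n, sum_symm_aux K]
    have hf0 : (v 0 : ℂ) * Complex.exp (-(2 * Real.pi * Complex.I * ((0:ℤ):ℂ) * n) / (2 * K + 1))
        = ((2 / w 0 - 1 : ℝ) : ℂ) := by
      rw [hv 0 h0mem]
      simp
    rw [hf0]
    have hsum2 : ∑ k ∈ Icc (1:ℤ) (K:ℤ),
        ((v k : ℂ) * Complex.exp (-(2 * Real.pi * Complex.I * (k:ℂ) * n) / (2 * K + 1))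
          + (v (-k) : ℂ) * Complex.exp (-(2 * Real.pi * Complex.I * ((-k:ℤ):ℂ) * n) / (2 * K + 1)))
        = ((∑ k ∈ Icc (1:ℤ) (K:ℤ), (-(2 * w k) / w 0) * (2 * Real.cos (θ k)) : ℝ) : ℂ) := by
      rw [Complex.ofReal_sum]
      refine Finset.sum_congr rfl fun k hk => ?_
      obtain ⟨e1, e2⟩ := hvpos k hk
      rw [e1, e2, ← mul_add, exp_pair_aux K k n, ← Complex.ofReal_mul]
    rw [hsum2, ← Complex.ofReal_add]
  -- real identity
  have hre : (2 / w 0 - 1) + ∑ k ∈ Icc (1:ℤ) (K:ℤ), (-(2 * w k) / w 0) * (2 * Real.cos (θ k))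
      = 1 + ∑ k ∈ Icc (1:ℤ) (K:ℤ), (4 * w k / w 0) * (1 - Real.cos (θ k)) := by
    have e1 : ∑ k ∈ Icc (1:ℤ) (K:ℤ), (-(2 * w k) / w 0) * (2 * Real.cos (θ k))
        = (-4 / w 0) * ∑ k ∈ Icc (1:ℤ) (K:ℤ), w k * Real.cos (θ k) := by
      rw [Finset.mul_sum]; exact Finset.sum_congr rfl fun k _ => by ring
    have e2 : ∑ k ∈ Icc (1:ℤ) (K:ℤ), (4 * w k / w 0) * (1 - Real.cos (θ k))
        = (4 / w 0) * ((∑ k ∈ Icc (1:ℤ) (K:ℤ), w k) - ∑ k ∈ Icc (1:ℤ) (K:ℤ), w k * Real.cos (θ k)) := by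
      rw [mul_sub, Finset.mul_sum, Finset.mul_sum, ← Finset.sum_sub_distrib]
      exact Finset.sum_congr rfl fun k _ => by ring
    rw [e1, e2]
    have hw0' : w 0 ≠ 0 := ne_of_gt hw0
    field_simp
    linear_combination (-2 : ℝ) * hA
  -- nonnegativity
  have hnn : 0 ≤ ∑ k ∈ Icc (1:ℤ) (K:ℤ), (4 * w k / w 0) * (1 - Real.cos (θ k)) := by
    refine Finset.sum_nonneg fun k hk => ?_
    have hwk : 0 ≤ w k := hw k (hmem k hk).1
    have hc : Real.cos (θ k) ≤ 1 := Real.cos_le_one _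
    have : 0 ≤ 4 * w k / w 0 := by positivity
    nlinarith
  refine ⟨by rw [hVn, hre], by linarith, ?_⟩
  rw [hVn, hre]
  have : (0:ℝ) < 1 + ∑ k ∈ Icc (1:ℤ) (K:ℤ), (4 * w k / w 0) * (1 - Real.cos (θ k)) := by
    linarith
  exact_mod_cast ne_of_gt this
end

section
/- The circular convolution operator x ↦ v ⊛ x on ℝ^N, with v defined by v_0 = 2/w_0 - 1 and v_k = -2 w_k / w_0 (w_k ≥ 0 symmetric, Σ w_k = 1, w_0 > 0), is invertible; hence the deconvolution (solution x of v ⊛ x = ȳ) exists and is unique. -/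
open Finset

/-- The circular convolution operator with the AR filter `v` is invertible:
deconvolution exists and is unique. -/
theorem stmt4 (K : ℕ) (w : ℤ → ℝ)
    (hw : ∀ k ∈ Icc (-(K : ℤ)) (K : ℤ), 0 ≤ w k)
    (hsym : ∀ k ∈ Icc (-(K : ℤ)) (K : ℤ), w k = w (-k))
    (hsum : ∑ k ∈ Icc (-(K : ℤ)) (K : ℤ), w k = 1)
    (hw0 : 0 < w 0)
    (v : ℤ → ℝ)
    (hv : ∀ k ∈ Icc (-(K : ℤ)) (K : ℤ),
      v k = if k = 0 then 2 / w 0 - 1 else -(2 * w k) / w 0) :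
    Function.Bijective (fun (x : ZMod (2 * K + 1) → ℝ) (n : ZMod (2 * K + 1)) =>
      ∑ k ∈ Icc (-(K : ℤ)) (K : ℤ), v k * x (n + (k : ZMod (2 * K + 1))))
    ∧ ∀ ybar : ZMod (2 * K + 1) → ℝ,
      ∃! x : ZMod (2 * K + 1) → ℝ,
        (fun n => ∑ k ∈ Icc (-(K : ℤ)) (K : ℤ),
          v k * x (n + (k : ZMod (2 * K + 1)))) = ybar := by
  haveI : NeZero (2 * K + 1) := ⟨by omega⟩
  have hw0' : w 0 ≠ 0 := ne_of_gt hw0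
  have h0 : (0 : ℤ) ∈ Icc (-(K : ℤ)) (K : ℤ) := by
    simp [Int.ofNat_nonneg]
  -- kernel is trivial
  have key : ∀ z : ZMod (2 * K + 1) → ℝ,
      (∀ n, ∑ k ∈ Icc (-(K : ℤ)) (K : ℤ), v k * z (n + (k : ZMod (2 * K + 1))) = 0) →
      z = 0 := by
    intro z hz
    have heq : ∀ n : ZMod (2 * K + 1), (1 + w 0 / 2) * z n =
        ∑ k ∈ Icc (-(K : ℤ)) (K : ℤ), w k * z (n + (k : ZMod (2 * K + 1))) := by
      intro n
      have h := hz n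
      rw [← Finset.sum_erase_add _ _ h0] at h
      have e1 : ∑ k ∈ (Icc (-(K : ℤ)) (K : ℤ)).erase 0,
          v k * z (n + (k : ZMod (2 * K + 1)))
          = -(2 / w 0) * ∑ k ∈ (Icc (-(K : ℤ)) (K : ℤ)).erase 0,
              w k * z (n + (k : ZMod (2 * K + 1))) := by
        rw [Finset.mul_sum]
        apply Finset.sum_congr rfl
        intro k hk
        rw [hv k (Finset.mem_of_mem_erase hk), if_neg (Finset.ne_of_mem_erase hk)]
        ring
      have e2 : ∑ k ∈ (Icc (-(K : ℤ)) (K : ℤ)).erase 0,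
          w k * z (n + (k : ZMod (2 * K + 1)))
          = (∑ k ∈ Icc (-(K : ℤ)) (K : ℤ), w k * z (n + (k : ZMod (2 * K + 1))))
            - w 0 * z n := by
        rw [← Finset.sum_erase_add _ _ h0]
        simp
      rw [e1, e2, hv 0 h0, if_pos rfl] at h
      simp only [Int.cast_zero, add_zero] at h
      field_simp at h ⊢
      nlinarith [h]
    obtain ⟨n0, hn0⟩ := Finite.exists_max (fun n : ZMod (2 * K + 1) => |z n|)
    have hb : |∑ k ∈ Icc (-(K : ℤ)) (K : ℤ), w k * z (n0 + (k : ZMod (2 * K + 1)))|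
        ≤ |z n0| := by
      calc |∑ k ∈ Icc (-(K : ℤ)) (K : ℤ), w k * z (n0 + (k : ZMod (2 * K + 1)))|
          ≤ ∑ k ∈ Icc (-(K : ℤ)) (K : ℤ), |w k * z (n0 + (k : ZMod (2 * K + 1)))| :=
            Finset.abs_sum_le_sum_abs _ _
        _ ≤ ∑ k ∈ Icc (-(K : ℤ)) (K : ℤ), w k * |z n0| := by
            apply Finset.sum_le_sum
            intro k hk
            rw [abs_mul, abs_of_nonneg (hw k hk)]
            exact mul_le_mul_of_nonneg_left (hn0 _) (hw k hk)
        _ = |z n0| := by rw [← Finset.sum_mul, hsum, one_mul]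
    have h1 : (1 + w 0 / 2) * |z n0| ≤ |z n0| := by
      have h2 := heq n0
      have h3 : |(1 + w 0 / 2) * z n0| ≤ |z n0| := by rw [h2]; exact hb
      rwa [abs_mul, abs_of_pos (by linarith : (0:ℝ) < 1 + w 0 / 2)] at h3
    have hz0 : |z n0| = 0 := by nlinarith [abs_nonneg (z n0)]
    funext n
    have h4 : |z n| ≤ 0 := hz0 ▸ hn0 n
    simpa using abs_eq_zero.mp (le_antisymm h4 (abs_nonneg _))
  -- package as a linear map
  let T : (ZMod (2 * K + 1) → ℝ) →ₗ[ℝ] (ZMod (2 * K + 1) → ℝ) :=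
    { toFun := fun x n => ∑ k ∈ Icc (-(K : ℤ)) (K : ℤ),
        v k * x (n + (k : ZMod (2 * K + 1)))
      map_add' := by
        intro x y; funext n
        simp [mul_add, Finset.sum_add_distrib]
      map_smul' := by
        intro c x; funext n
        simp only [Pi.smul_apply, smul_eq_mul, RingHom.id_apply]
        rw [Finset.mul_sum]
        apply Finset.sum_congr rfl
        intro k _
        ring }
  have hinj : Function.Injective T := by
    intro x y hxy
    have hz : ∀ n, ∑ k ∈ Icc (-(K : ℤ)) (K : ℤ),
        v k * (x - y) (n + (k : ZMod (2 * K + 1))) = 0 := by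
      intro n
      have : T x n = T y n := by rw [hxy]
      simp only [T, LinearMap.coe_mk, AddHom.coe_mk] at this
      simp only [Pi.sub_apply, mul_sub, Finset.sum_sub_distrib]
      linarith [this]
    have := key (x - y) hz
    exact sub_eq_zero.mp this
  have hbij : Function.Bijective T :=
    ⟨hinj, (LinearMap.injective_iff_surjective).mp hinj⟩
  exact ⟨hbij, fun ybar => hbij.existsUnique ybar⟩
end
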